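/- Suppose the splitting condition holds with constants c, N, ε. Let μ and ν be probability measures on [0,1] with μ([0,x]) ≥ ν([0,x]) for all x ∈ [0,1]. Then 0 ≤ F_N^{(μ)}(r) − F_N^{(ν)}(r) for every r, and sup_r (F_N^{(μ)}(r) − F_N^{(ν)}(r)) ≤ (1 − ε) · sup_x (μ([0,x]) − ν([0,x])). -/

import Mathlib

open MeasureTheory ProbabilityTheory Set Filter Topology

noncomputable def supD (μ ν : Measure ℝ) : ℝ :=
  ⨆ x : Icc (0:ℝ) 1, ((μ (Icc 0 (x : ℝ))).toReal - (ν (Icc 0 (x : ℝ))).toReal)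

section Aux

variable (μ ν : Measure ℝ) [IsProbabilityMeasure μ] [IsProbabilityMeasure ν]

lemma meas_compl_zero (h : μ (Icc (0:ℝ) 1) = 1) : μ (Icc (0:ℝ) 1)ᶜ = 0 := by
  rw [measure_compl measurableSet_Icc (measure_ne_top _ _), h, measure_univ, tsub_self]

lemma meas_Iic_eq (h : μ (Icc (0:ℝ) 1) = 1) {s : ℝ} (hs : s ∈ Icc (0:ℝ) 1) :
    μ (Iic s) = μ (Icc 0 s) := by
  refine le_antisymm ?_ (measure_mono fun x hx => hx.2)
  have h0 : μ (Iio (0:ℝ)) = 0 :=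
    measure_mono_null (fun x hx => mem_compl fun hx' => absurd hx'.1 (not_le.2 hx)) (meas_compl_zero μ h)
  calc μ (Iic s) ≤ μ (Iio 0 ∪ Icc 0 s) := measure_mono (fun x hx => by
        rcases lt_or_ge x 0 with h' | h'
        · exact Or.inl h'
        · exact Or.inr ⟨h', hx⟩)
    _ ≤ μ (Iio 0) + μ (Icc 0 s) := measure_union_le _ _
    _ = μ (Icc 0 s) := by rw [h0, zero_add]

lemma bddAbove_D : BddAbove (range fun x : Icc (0:ℝ) 1 =>
    ((μ (Icc 0 (x : ℝ))).toReal - (ν (Icc 0 (x : ℝ))).toReal)) := by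
  refine ⟨1, ?_⟩
  rintro _ ⟨x, rfl⟩
  dsimp only
  have h1 : (μ (Icc 0 (x:ℝ))).toReal ≤ 1 :=
    ENNReal.toReal_mono ENNReal.one_ne_top prob_le_one
  have h2 : 0 ≤ (ν (Icc 0 (x:ℝ))).toReal := ENNReal.toReal_nonneg
  linarith

lemma le_supD (hs : s ∈ Icc (0:ℝ) 1) :
    (μ (Icc 0 s)).toReal - (ν (Icc 0 s)).toReal ≤ supD μ ν :=
  le_ciSup (bddAbove_D μ ν) (⟨s, hs⟩ : Icc (0:ℝ) 1)

lemma supD_nonneg (hμ : μ (Icc (0:ℝ) 1) = 1) (hν : ν (Icc (0:ℝ) 1) = 1) :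
    0 ≤ supD μ ν := by
  have h := le_supD μ ν (s := 1) ⟨zero_le_one, le_refl 1⟩
  rw [hμ, hν] at h
  simpa using h

variable (hμs : μ (Icc (0:ℝ) 1) = 1) (hνs : ν (Icc (0:ℝ) 1) = 1)
  (hdom : ∀ x ∈ Icc (0:ℝ) 1, ν (Icc 0 x) ≤ μ (Icc 0 x))

include hμs hνs hdom in
lemma Iic_comp (s : ℝ) :
    ν (Iic s) ≤ μ (Iic s) ∧ μ (Iic s) ≤ ν (Iic s) + ENNReal.ofReal (supD μ ν) := by
  rcases lt_or_ge s 0 with h | h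
  · have hμ0 : μ (Iic s) = 0 := measure_mono_null
      (fun x hx => mem_compl fun hx' => absurd hx'.1 (not_le.2 (lt_of_le_of_lt hx h))) (meas_compl_zero μ hμs)
    have hν0 : ν (Iic s) = 0 := measure_mono_null
      (fun x hx => mem_compl fun hx' => absurd hx'.1 (not_le.2 (lt_of_le_of_lt hx h))) (meas_compl_zero ν hνs)
    rw [hμ0, hν0]; exact ⟨le_refl _, zero_le⟩
  rcases le_or_gt s 1 with h1 | h1
  · rw [meas_Iic_eq μ hμs ⟨h, h1⟩, meas_Iic_eq ν hνs ⟨h, h1⟩]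
    refine ⟨hdom s ⟨h, h1⟩, ?_⟩
    have hD := le_supD μ ν (s := s) ⟨h, h1⟩
    calc μ (Icc 0 s) = ENNReal.ofReal ((μ (Icc 0 s)).toReal) :=
          (ENNReal.ofReal_toReal (measure_ne_top _ _)).symm
      _ ≤ ENNReal.ofReal ((ν (Icc 0 s)).toReal + supD μ ν) :=
          ENNReal.ofReal_le_ofReal (by linarith)
      _ ≤ ENNReal.ofReal ((ν (Icc 0 s)).toReal) + ENNReal.ofReal (supD μ ν) :=
          ENNReal.ofReal_add_le
      _ = ν (Icc 0 s) + ENNReal.ofReal (supD μ ν) := by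
          rw [ENNReal.ofReal_toReal (measure_ne_top _ _)]
  · have hμ1 : μ (Iic s) = 1 := le_antisymm prob_le_one
      (by rw [← hμs]; exact measure_mono fun x hx => le_trans hx.2 h1.le)
    have hν1 : ν (Iic s) = 1 := le_antisymm prob_le_one
      (by rw [← hνs]; exact measure_mono fun x hx => le_trans hx.2 h1.le)
    rw [hμ1, hν1]; exact ⟨le_refl _, le_add_right (le_refl _)⟩

include hμs hνs hdom in
lemma Iio_comp (s : ℝ) :
    ν (Iio s) ≤ μ (Iio s) ∧ μ (Iio s) ≤ ν (Iio s) + ENNReal.ofReal (supD μ ν) := by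
  set a : ℕ → ℝ := fun n => s - 1 / (n + 1) with ha
  have hmono : Monotone fun n => Iic (a n) := by
    intro n m hnm
    apply Iic_subset_Iic.2
    have : (1:ℝ) / (m + 1) ≤ 1 / (n + 1) := by
      apply one_div_le_one_div_of_le (by positivity)
      exact_mod_cast Nat.succ_le_succ hnm
    simp only [ha]; linarith
  have hUnion : (⋃ n, Iic (a n)) = Iio s := by
    ext x
    simp only [mem_iUnion, mem_Iic, mem_Iio]
    constructor
    · rintro ⟨n, hn⟩
      have : (0:ℝ) < 1 / (n + 1) := by positivity
      simp only [ha] at hn; linarith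
    · intro hx
      obtain ⟨n, hn⟩ := exists_nat_one_div_lt (sub_pos.2 hx)
      exact ⟨n, by simp only [ha]; linarith⟩
  have hμU : μ (Iio s) = ⨆ n, μ (Iic (a n)) := by
    rw [← hUnion]; exact hmono.directed_le.measure_iUnion
  have hνU : ν (Iio s) = ⨆ n, ν (Iic (a n)) := by
    rw [← hUnion]; exact hmono.directed_le.measure_iUnion
  constructor
  · rw [hμU, hνU]
    exact iSup_mono fun n => (Iic_comp μ ν hμs hνs hdom (a n)).1
  · rw [hμU, hνU, ENNReal.iSup_add]
    exact iSup_mono fun n => (Iic_comp μ ν hμs hνs hdom (a n)).2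

include hμs hνs hdom in
lemma lower_comp {S : Set ℝ} (hS : IsLowerSet S) :
    ν S ≤ μ S ∧ μ S ≤ ν S + ENNReal.ofReal (supD μ ν) := by
  rcases eq_empty_or_nonempty S with rfl | hne
  · simp
  by_cases huniv : S = univ
  · subst huniv
    simp only [measure_univ]
    exact ⟨le_refl _, le_add_right (le_refl _)⟩
  have hbdd : BddAbove S := by
    obtain ⟨y, hy⟩ : ∃ y, y ∉ S := by
      by_contra h
      push_neg at h
      exact huniv (eq_univ_of_forall h)
    refine ⟨y, fun x hx => ?_⟩
    by_contra h
    push_neg at h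
    exact hy (hS h.le hx)
  set t := sSup S with ht
  by_cases htS : t ∈ S
  · have : S = Iic t := by
      ext x
      exact ⟨fun h => le_csSup hbdd h, fun h => hS h htS⟩
    rw [this]; exact Iic_comp μ ν hμs hνs hdom t
  · have : S = Iio t := by
      ext x
      constructor
      · intro h
        exact lt_of_le_of_ne (le_csSup hbdd h) (fun he => htS (by rwa [he] at h))
      · intro h
        obtain ⟨y, hyS, hxy⟩ := exists_lt_of_lt_csSup hne h
        exact hS hxy.le hyS
    rw [this]; exact Iio_comp μ ν hμs hνs hdom t

include hμs hνs hdom in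
lemma core_contraction (K : ℝ → ℝ) (hKm : Measurable K) (hKa : Antitone K)
    (M : ℝ) (hK0 : ∀ x, 0 ≤ K x) (hKM : ∀ x, K x ≤ M) :
    (∫ x, K x ∂ν) ≤ (∫ x, K x ∂μ) ∧
    (∫ x, K x ∂μ) ≤ (∫ x, K x ∂ν) + M * supD μ ν := by
  have hM : 0 ≤ M := (hK0 0).trans (hKM 0)
  have hD0 : 0 ≤ supD μ ν := supD_nonneg μ ν hμs hνs
  have hlower : ∀ t : ℝ, IsLowerSet {x : ℝ | t < K x} := by
    intro t b a hba hb
    exact lt_of_lt_of_le hb (hKa hba)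
  -- lintegral representations
  have hμrep : ∫⁻ x, ENNReal.ofReal (K x) ∂μ = ∫⁻ t in Ioi 0, μ {x : ℝ | t < K x} :=
    lintegral_eq_lintegral_meas_lt μ (ae_of_all _ hK0) hKm.aemeasurable
  have hνrep : ∫⁻ x, ENNReal.ofReal (K x) ∂ν = ∫⁻ t in Ioi 0, ν {x : ℝ | t < K x} :=
    lintegral_eq_lintegral_meas_lt ν (ae_of_all _ hK0) hKm.aemeasurable
  have hμfin : ∫⁻ x, ENNReal.ofReal (K x) ∂μ ≠ ⊤ := by
    apply ne_of_lt
    calc ∫⁻ x, ENNReal.ofReal (K x) ∂μ ≤ ∫⁻ _, ENNReal.ofReal M ∂μ :=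
          lintegral_mono fun x => ENNReal.ofReal_le_ofReal (hKM x)
      _ = ENNReal.ofReal M := by rw [lintegral_const, measure_univ, mul_one]
      _ < ⊤ := ENNReal.ofReal_lt_top
  have hνfin : ∫⁻ x, ENNReal.ofReal (K x) ∂ν ≠ ⊤ := by
    apply ne_of_lt
    calc ∫⁻ x, ENNReal.ofReal (K x) ∂ν ≤ ∫⁻ _, ENNReal.ofReal M ∂ν :=
          lintegral_mono fun x => ENNReal.ofReal_le_ofReal (hKM x)
      _ = ENNReal.ofReal M := by rw [lintegral_const, measure_univ, mul_one]
      _ < ⊤ := ENNReal.ofReal_lt_top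
  have hBμ : ∫ x, K x ∂μ = (∫⁻ x, ENNReal.ofReal (K x) ∂μ).toReal :=
    integral_eq_lintegral_of_nonneg_ae (ae_of_all _ hK0) hKm.aestronglyMeasurable
  have hBν : ∫ x, K x ∂ν = (∫⁻ x, ENNReal.ofReal (K x) ∂ν).toReal :=
    integral_eq_lintegral_of_nonneg_ae (ae_of_all _ hK0) hKm.aestronglyMeasurable
  have claim1 : ∫⁻ x, ENNReal.ofReal (K x) ∂ν ≤ ∫⁻ x, ENNReal.ofReal (K x) ∂μ := by
    rw [hμrep, hνrep]
    exact lintegral_mono fun t => (lower_comp μ ν hμs hνs hdom (hlower t)).1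
  have claim2 : ∫⁻ x, ENNReal.ofReal (K x) ∂μ ≤
      ∫⁻ x, ENNReal.ofReal (K x) ∂ν + ENNReal.ofReal (M * supD μ ν) := by
    rw [hμrep, hνrep]
    have hsplit : Ioi (0:ℝ) = Ioc 0 M ∪ Ioi M := (Ioc_union_Ioi_eq_Ioi hM).symm
    have hzero : ∫⁻ t in Ioi M, μ {x : ℝ | t < K x} = 0 := by
      rw [setLIntegral_congr_fun measurableSet_Ioi
        (fun t (ht : M < t) => by
          have he : {x : ℝ | t < K x} = ∅ := by
            ext x; simp only [mem_setOf_eq, mem_empty_iff_false, iff_false, not_lt]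
            exact (hKM x).trans ht.le
          rw [he, measure_empty])]
      simp
    have hμsplit : ∫⁻ t in Ioi 0, μ {x : ℝ | t < K x}
        = ∫⁻ t in Ioc 0 M, μ {x : ℝ | t < K x} := by
      rw [hsplit, lintegral_union measurableSet_Ioi (Ioc_disjoint_Ioi le_rfl), hzero, add_zero]
    rw [hμsplit]
    calc ∫⁻ t in Ioc 0 M, μ {x : ℝ | t < K x}
        ≤ ∫⁻ t in Ioc 0 M, (ν {x : ℝ | t < K x} + ENNReal.ofReal (supD μ ν)) :=
          lintegral_mono fun t => (lower_comp μ ν hμs hνs hdom (hlower t)).2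
      _ = (∫⁻ t in Ioc 0 M, ν {x : ℝ | t < K x}) + ENNReal.ofReal (supD μ ν) * volume (Ioc (0:ℝ) M) := by
          rw [lintegral_add_right _ measurable_const, setLIntegral_const]
      _ ≤ (∫⁻ t in Ioi 0, ν {x : ℝ | t < K x}) + ENNReal.ofReal (M * supD μ ν) := by
          gcongr
          · exact Ioc_subset_Ioi_self
          · rw [Real.volume_Ioc, ← ENNReal.ofReal_mul hD0, sub_zero, mul_comm]
  constructor
  · rw [hBμ, hBν]
    exact ENNReal.toReal_mono hμfin claim1
  · rw [hBμ, hBν]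
    have := ENNReal.toReal_mono (by
        exact ENNReal.add_ne_top.2 ⟨hνfin, ENNReal.ofReal_ne_top⟩) claim2
    rwa [ENNReal.toReal_add hνfin ENNReal.ofReal_ne_top,
      ENNReal.toReal_ofReal (mul_nonneg hM hD0)] at this

end Aux

theorem stmt2
    {Ω : Type*} [MeasurableSpace Ω] {V : Type*} [MeasurableSpace V]
    (Pr : Measure Ω) [IsProbabilityMeasure Pr]
    (ξ : ℕ → Ω → V) (hξ_meas : ∀ t, Measurable (ξ t))
    (hξ_indep : iIndepFun ξ Pr)
    (hξ_ident : ∀ t, Measure.map (ξ t) Pr = Measure.map (ξ 0) Pr)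
    (f : ℝ → V → ℝ) (hf_meas : Measurable (Function.uncurry f))
    (hf_range : ∀ x ∈ Icc (0:ℝ) 1, ∀ v : V, f x v ∈ Icc (0:ℝ) 1)
    (hf_mono : ∀ v : V, ∀ x₁ ∈ Icc (0:ℝ) 1, ∀ x₂ ∈ Icc (0:ℝ) 1, x₁ ≤ x₂ → f x₁ v ≤ f x₂ v)
    (X : ℝ → ℕ → Ω → ℝ)
    (hX0 : ∀ x ω, X x 0 ω = x)
    (hXrec : ∀ x t ω, X x (t + 1) ω = f (X x t ω) (ξ t ω))
    -- splitting condition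
    (c : ℝ) (hc : c ∈ Icc (0:ℝ) 1) (N : ℕ) (hN : 1 ≤ N)
    (hsplit1 : 0 < Pr {ω | X 1 N ω ≤ c})
    (hsplit2 : 0 < Pr {ω | c ≤ X 0 N ω})
    -- stochastically ordered initial distributions on [0,1]
    (μ ν : Measure ℝ) (hμ_prob : IsProbabilityMeasure μ) (hν_prob : IsProbabilityMeasure ν)
    (hμ_supp : μ (Icc (0:ℝ) 1) = 1) (hν_supp : ν (Icc (0:ℝ) 1) = 1)
    (hdom : ∀ x ∈ Icc (0:ℝ) 1, ν (Icc 0 x) ≤ μ (Icc 0 x)) :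
    ∀ r : ℝ,
      0 ≤ (∫ x, (Pr {ω | X x N ω ≤ r}).toReal ∂μ) - (∫ x, (Pr {ω | X x N ω ≤ r}).toReal ∂ν) ∧
      (∫ x, (Pr {ω | X x N ω ≤ r}).toReal ∂μ) - (∫ x, (Pr {ω | X x N ω ≤ r}).toReal ∂ν) ≤
        (1 - min (Pr {ω | X 1 N ω ≤ c}).toReal (Pr {ω | c ≤ X 0 N ω}).toReal) *
          ⨆ x : Icc (0:ℝ) 1, ((μ (Icc 0 (x : ℝ))).toReal - (ν (Icc 0 (x : ℝ))).toReal) := by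
  intro r
  -- basic facts about the dynamics
  have hXmeas : ∀ t, Measurable fun p : ℝ × Ω => X p.1 t p.2 := by
    intro t
    induction t with
    | zero => simpa only [hX0] using (measurable_fst : Measurable fun p : ℝ × Ω => p.1)
    | succ t ih =>
        have : (fun p : ℝ × Ω => X p.1 (t + 1) p.2)
            = fun p : ℝ × Ω => Function.uncurry f (X p.1 t p.2, ξ t p.2) := by
          funext p; simp [hXrec, Function.uncurry]
        rw [this]
        exact hf_meas.comp (ih.prodMk ((hξ_meas t).comp measurable_snd))
  have hrange : ∀ t, ∀ x ∈ Icc (0:ℝ) 1, ∀ ω, X x t ω ∈ Icc (0:ℝ) 1 := by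
    intro t
    induction t with
    | zero => intro x hx ω; simpa [hX0] using hx
    | succ t ih => intro x hx ω; rw [hXrec]; exact hf_range _ (ih x hx ω) _
  have hmono : ∀ t, ∀ x₁ ∈ Icc (0:ℝ) 1, ∀ x₂ ∈ Icc (0:ℝ) 1, x₁ ≤ x₂ →
      ∀ ω, X x₁ t ω ≤ X x₂ t ω := by
    intro t
    induction t with
    | zero => intro x₁ _ x₂ _ h ω; simpa [hX0] using h
    | succ t ih =>
        intro x₁ h₁ x₂ h₂ h ω
        rw [hXrec, hXrec]
        exact hf_mono _ _ (hrange t x₁ h₁ ω) _ (hrange t x₂ h₂ ω) (ih x₁ h₁ x₂ h₂ h ω)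
  -- the distribution function in the starting point
  set G : ℝ → ℝ := fun x => (Pr {ω | X x N ω ≤ r}).toReal with hG
  have hGmeas : Measurable G := by
    have hs : MeasurableSet {p : ℝ × Ω | X p.1 N p.2 ≤ r} :=
      measurableSet_le (hXmeas N) measurable_const
    exact (measurable_measure_prodMk_left hs).ennreal_toReal
  have hG01 : ∀ x, 0 ≤ G x ∧ G x ≤ 1 := fun x =>
    ⟨ENNReal.toReal_nonneg, ENNReal.toReal_mono ENNReal.one_ne_top prob_le_one⟩
  -- clamping to [0,1]
  set π : ℝ → ℝ := fun x => max 0 (min x 1) with hπ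
  have hπmem : ∀ x, π x ∈ Icc (0:ℝ) 1 :=
    fun x => ⟨le_max_left _ _, max_le zero_le_one (min_le_right _ _)⟩
  have hπeq : ∀ x ∈ Icc (0:ℝ) 1, π x = x := by
    intro x hx
    simp only [hπ]
    rw [min_eq_left hx.2, max_eq_right hx.1]
  have hπmono : Monotone π := fun a b hab =>
    max_le_max le_rfl (min_le_min hab le_rfl)
  have hπmeas : Measurable π := measurable_const.max (measurable_id.min measurable_const)
  have hGanti : ∀ x₁ ∈ Icc (0:ℝ) 1, ∀ x₂ ∈ Icc (0:ℝ) 1, x₁ ≤ x₂ → G x₂ ≤ G x₁ := by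
    intro x₁ h₁ x₂ h₂ h
    apply ENNReal.toReal_mono (measure_ne_top _ _)
    exact measure_mono fun ω (hω : X x₂ N ω ≤ r) =>
      le_trans (hmono N x₁ h₁ x₂ h₂ h ω) hω
  -- a.e. identification of G with its clamped version
  have hae_μ : ∀ᵐ x ∂μ, x ∈ Icc (0:ℝ) 1 := by
    rw [ae_iff]
    exact meas_compl_zero μ hμ_supp
  have hae_ν : ∀ᵐ x ∂ν, x ∈ Icc (0:ℝ) 1 := by
    rw [ae_iff]
    exact meas_compl_zero ν hν_supp
  -- the ε's
  set ε₁ : ℝ := (Pr {ω | X 1 N ω ≤ c}).toReal with hε₁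
  set ε₂ : ℝ := (Pr {ω | c ≤ X 0 N ω}).toReal with hε₂
  set ε : ℝ := min ε₁ ε₂ with hε
  have hε₁1 : ε₁ ≤ 1 := ENNReal.toReal_mono ENNReal.one_ne_top prob_le_one
  have hε₂1 : ε₂ ≤ 1 := ENNReal.toReal_mono ENNReal.one_ne_top prob_le_one
  have hε₁0 : 0 ≤ ε₁ := ENNReal.toReal_nonneg
  have hε₂0 : 0 ≤ ε₂ := ENNReal.toReal_nonneg
  have hε0 : 0 ≤ ε := le_min hε₁0 hε₂0
  have hD0 : 0 ≤ supD μ ν := supD_nonneg μ ν hμ_supp hν_supp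
  have hgoal : (∫ x, G x ∂ν) ≤ (∫ x, G x ∂μ) ∧
      (∫ x, G x ∂μ) ≤ (∫ x, G x ∂ν) + (1 - ε) * supD μ ν := by
    rcases le_or_gt c r with hrc | hrc
    · -- case r ≥ c : use ε₁ as floor
      set K : ℝ → ℝ := fun x => G (π x) - ε₁ with hK
      have hKlb : ∀ x, ε₁ ≤ G (π x) := by
        intro x
        apply ENNReal.toReal_mono (measure_ne_top _ _)
        apply measure_mono
        intro ω (hω : X 1 N ω ≤ c)
        show X (π x) N ω ≤ r
        exact le_trans (le_trans (hmono N (π x) (hπmem x) 1 ⟨zero_le_one, le_refl 1⟩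
          (hπmem x).2 ω) hω) hrc
      have hKm : Measurable K := (hGmeas.comp hπmeas).sub measurable_const
      have hKa : Antitone K := fun a b hab => by
        simp only [hK]
        have := hGanti (π a) (hπmem a) (π b) (hπmem b) (hπmono hab)
        linarith
      have hK0 : ∀ x, 0 ≤ K x := fun x => by
        simp only [hK]; have := hKlb x; linarith
      have hKM : ∀ x, K x ≤ 1 - ε := fun x => by
        simp only [hK]
        have h1 := (hG01 (π x)).2
        have h2 : ε ≤ ε₁ := min_le_left _ _
        linarith
      obtain ⟨hcore1, hcore2⟩ := core_contraction μ ν hμ_supp hν_supp hdom K hKm hKa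
        (1 - ε) hK0 hKM
      -- identify integrals
      have hKint : ∀ (ρ : Measure ℝ), IsProbabilityMeasure ρ → Integrable K ρ := by
        intro ρ hρ
        refine ⟨hKm.aestronglyMeasurable, HasFiniteIntegral.of_bounded (C := 1 + ε₁) ?_⟩
        refine ae_of_all _ fun x => ?_
        rw [Real.norm_eq_abs, abs_le]
        have h1 := hK0 x
        have h2 := hKM x
        have h3 : ε ≤ ε₁ := min_le_left _ _
        constructor <;> [linarith; linarith]
      have hint : ∀ (ρ : Measure ℝ), IsProbabilityMeasure ρ → (∀ᵐ x ∂ρ, x ∈ Icc (0:ℝ) 1) →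
          ∫ x, G x ∂ρ = (∫ x, K x ∂ρ) + ε₁ := by
        intro ρ hρ hae
        have : ∫ x, G x ∂ρ = ∫ x, (K x + ε₁) ∂ρ := by
          apply integral_congr_ae
          filter_upwards [hae] with x hx
          simp only [hK]
          rw [hπeq x hx]; ring
        rw [this, integral_add (hKint ρ hρ) (integrable_const _), integral_const,
          probReal_univ]
        simp
      rw [hint μ hμ_prob hae_μ, hint ν hν_prob hae_ν]
      constructor
      · linarith
      · linarith
    · -- case r < c : use ε₂ as ceiling
      set K : ℝ → ℝ := fun x => G (π x) with hK
      have hKub : ∀ x, G (π x) ≤ 1 - ε₂ := by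
        intro x
        have hsub : {ω | X (π x) N ω ≤ r} ⊆ {ω | c ≤ X 0 N ω}ᶜ := by
          intro ω (hω : X (π x) N ω ≤ r)
          simp only [mem_compl_iff, mem_setOf_eq, not_le]
          calc X 0 N ω ≤ X (π x) N ω :=
                hmono N 0 ⟨le_refl 0, zero_le_one⟩ (π x) (hπmem x) (hπmem x).1 ω
            _ ≤ r := hω
            _ < c := hrc
        have hmeas0 : MeasurableSet {ω | c ≤ X 0 N ω} := by
          have : Measurable fun ω => X 0 N ω :=
            (hXmeas N).comp (measurable_const.prodMk measurable_id)
          exact measurableSet_le measurable_const this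
        calc G (π x) ≤ (Pr {ω | c ≤ X 0 N ω}ᶜ).toReal :=
              ENNReal.toReal_mono (measure_ne_top _ _) (measure_mono hsub)
          _ = 1 - ε₂ := by
              rw [prob_compl_eq_one_sub hmeas0,
                ENNReal.toReal_sub_of_le prob_le_one ENNReal.one_ne_top]
              simp [hε₂]
        
      have hKm : Measurable K := hGmeas.comp hπmeas
      have hKa : Antitone K := fun a b hab =>
        hGanti (π a) (hπmem a) (π b) (hπmem b) (hπmono hab)
      have hK0 : ∀ x, 0 ≤ K x := fun x => (hG01 (π x)).1
      have hKM : ∀ x, K x ≤ 1 - ε := fun x => by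
        simp only [hK]
        have h2 : ε ≤ ε₂ := min_le_right _ _
        have := hKub x
        linarith
      obtain ⟨hcore1, hcore2⟩ := core_contraction μ ν hμ_supp hν_supp hdom K hKm hKa
        (1 - ε) hK0 hKM
      have hint : ∀ (ρ : Measure ℝ), (∀ᵐ x ∂ρ, x ∈ Icc (0:ℝ) 1) →
          ∫ x, G x ∂ρ = ∫ x, K x ∂ρ := by
        intro ρ hae
        apply integral_congr_ae
        filter_upwards [hae] with x hx
        simp only [hK]
        rw [hπeq x hx]
      rw [hint μ hae_μ, hint ν hae_ν]
      exact ⟨hcore1, hcore2⟩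
  have : (⨆ x : Icc (0:ℝ) 1, ((μ (Icc 0 (x : ℝ))).toReal - (ν (Icc 0 (x : ℝ))).toReal))
      = supD μ ν := rfl
  rw [this]
  exact ⟨by linarith [hgoal.1], by linarith [hgoal.2]⟩
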